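/- Let x ∈ gl₃(𝕂) be a 3×3 matrix with x₃₃ = 0 and x₁₃ ≠ x₃₁. Then there exist g₁, g₂ ∈ N₃ such that g₁·x·g₂^τ = x and χ_{N₃}(g₁)·χ_{N₃}(g₂) ≠ 1. -/
import Mathlib


open Matrix

/-- The subgroup `N₃ ⊆ GL₃(𝕂)` of matrices of the form `[[1,0,d],[0,1,c],[0,0,1]]`. -/
def N3 (𝕂 : Type*) [RCLike 𝕂] : Set (Matrix (Fin 3) (Fin 3) 𝕂) :=
  {g | ∃ c d : 𝕂, g = !![1, 0, d; 0, 1, c; 0, 0, 1]}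

/-- If `x ∈ gl₃(𝕂)` has `x₃₃ = 0` and `x₁₃ ≠ x₃₁` (1-indexed), then there are
`g₁, g₂ ∈ N₃` with `g₁·x·g₂^τ = x` and `χ_{N₃}(g₁)·χ_{N₃}(g₂) ≠ 1`, where
`χ_{N₃}(g) = ψ(d)` is read off from the `(1,3)` entry of `g`. -/
theorem gl3_unipotent_incompatibility {𝕂 : Type*} [RCLike 𝕂]
    (ψ : 𝕂 → ℂ) (hψ_add : ∀ s t, ψ (s + t) = ψ s * ψ t) (hψ_unitary : ∀ t, ‖ψ t‖ = 1)
    (hψ_cont : Continuous ψ) (hψ_nontriv : ∃ t, ψ t ≠ 1)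
    (x : Matrix (Fin 3) (Fin 3) 𝕂) (h33 : x 2 2 = 0) (hne : x 0 2 ≠ x 2 0) :
    ∃ g₁ ∈ N3 𝕂, ∃ g₂ ∈ N3 𝕂, g₁ * x * g₂ᵀ = x ∧ ψ (g₁ 0 2) * ψ (g₂ 0 2) ≠ 1 := by
  obtain ⟨t₀, ht₀⟩ := hψ_nontriv
  have ha : x 0 2 - x 2 0 ≠ 0 := sub_ne_zero.mpr hne
  obtain ⟨t, ht⟩ : ∃ t : 𝕂, t * (x 0 2 - x 2 0) = t₀ :=
    ⟨t₀ / (x 0 2 - x 2 0), div_mul_cancel₀ _ ha⟩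
  refine ⟨!![1, 0, t * x 0 2; 0, 1, t * x 1 2; 0, 0, 1], ⟨t * x 1 2, t * x 0 2, rfl⟩,
    !![1, 0, -(t * x 2 0); 0, 1, -(t * x 2 1); 0, 0, 1],
    ⟨-(t * x 2 1), -(t * x 2 0), rfl⟩, ?_, ?_⟩
  · ext i j
    fin_cases i <;> fin_cases j <;>
      simp [Matrix.mul_apply, Fin.sum_univ_three, Matrix.vecMul, dotProduct,
        Matrix.vecHead, Matrix.vecTail, Matrix.transpose_apply, Function.comp, h33] <;> ring
  · have h1 : (!![1, 0, t * x 0 2; 0, 1, t * x 1 2; 0, 0, 1] : Matrix (Fin 3) (Fin 3) 𝕂) 0 2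
        = t * x 0 2 := by simp
    have h2 : (!![1, 0, -(t * x 2 0); 0, 1, -(t * x 2 1); 0, 0, 1] : Matrix (Fin 3) (Fin 3) 𝕂) 0 2
        = -(t * x 2 0) := by simp
    rw [h1, h2, ← hψ_add]
    have h3 : t * x 0 2 + -(t * x 2 0) = t₀ := by rw [← ht]; ring
    rwa [h3]
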